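/- For any reals c > 0 and r with 1 < r < 2, the function g(t) = 2^t/r^t is increasing in t, and the expected per-attempt query cost ∑_{i=0}^{t} min(2^i, 2^t)/r^i divided by the per-attempt success probability 2^t/(r^t · n^c) equals Θ(n^c), uniformly over t. -/

import Mathlib

/-- For `1 < r < 2` and `c > 0`: the function `t ↦ 2^t / r^t` is increasing, and the
expected per-attempt query cost `∑_{i=0}^{t} min(2^i, 2^t)/r^i` divided by the
per-attempt success probability `2^t/(r^t · n^c)` is `Θ(n^c)`, uniformly over `t`. -/
theorem stmt_16 (c r : ℝ) (hc : 0 < c) (hr1 : 1 < r) (hr2 : r < 2) :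
    (∀ t t' : ℕ, t ≤ t' → (2 : ℝ) ^ t / r ^ t ≤ (2 : ℝ) ^ t' / r ^ t') ∧
      ∃ C₁ C₂ : ℝ, 0 < C₁ ∧ 0 < C₂ ∧ ∀ n : ℝ, 1 ≤ n → ∀ t : ℕ,
        C₁ * n ^ c ≤
            (∑ i ∈ Finset.range (t + 1), min ((2 : ℝ) ^ i) ((2 : ℝ) ^ t) / r ^ i) /
              ((2 : ℝ) ^ t / (r ^ t * n ^ c)) ∧
          (∑ i ∈ Finset.range (t + 1), min ((2 : ℝ) ^ i) ((2 : ℝ) ^ t) / r ^ i) /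
              ((2 : ℝ) ^ t / (r ^ t * n ^ c)) ≤ C₂ * n ^ c := by
  have hr0 : (0:ℝ) < r := lt_trans one_pos hr1
  have hq1 : (1:ℝ) < 2 / r := (one_lt_div hr0).mpr hr2
  set q : ℝ := 2 / r with hqdef
  have hq0 : (0:ℝ) < q := lt_trans one_pos hq1
  constructor
  · intro t t' h
    have e1 : (2:ℝ) ^ t / r ^ t = q ^ t := (div_pow 2 r t).symm
    have e2 : (2:ℝ) ^ t' / r ^ t' = q ^ t' := (div_pow 2 r t').symm
    rw [e1, e2]
    exact pow_le_pow_right₀ hq1.le h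
  · refine ⟨1, q / (q - 1), one_pos, div_pos hq0 (sub_pos.mpr hq1), ?_⟩
    intro n hn t
    have hnc : (0:ℝ) < n ^ c := Real.rpow_pos_of_pos (by linarith) c
    have hqt : (0:ℝ) < q ^ t := pow_pos hq0 t
    have hsum : (∑ i ∈ Finset.range (t + 1), min ((2 : ℝ) ^ i) ((2 : ℝ) ^ t) / r ^ i)
        = ∑ i ∈ Finset.range (t + 1), q ^ i := by
      refine Finset.sum_congr rfl fun i hi => ?_
      rw [min_eq_left (pow_le_pow_right₀ (by norm_num)
        (Finset.mem_range_succ_iff.mp hi)), hqdef, div_pow]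
    set S : ℝ := ∑ i ∈ Finset.range (t + 1), q ^ i with hSdef
    have hSlow : q ^ t ≤ S :=
      Finset.single_le_sum (f := fun i => q ^ i) (fun i _ => (pow_pos hq0 i).le)
        (Finset.self_mem_range_succ t)
    have hShigh : S ≤ q ^ (t + 1) / (q - 1) := by
      rw [hSdef, geom_sum_eq (ne_of_gt hq1)]
      gcongr
      · linarith
    have hden : (2:ℝ) ^ t / (r ^ t * n ^ c) = q ^ t / n ^ c := by
      rw [hqdef, div_pow, div_div]
    rw [hsum, hden, div_div_eq_mul_div]
    constructor
    · rw [one_mul, le_div_iff₀ hqt]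
      calc n ^ c * q ^ t = q ^ t * n ^ c := by ring
        _ ≤ S * n ^ c := mul_le_mul_of_nonneg_right hSlow hnc.le
    · rw [div_le_iff₀ hqt]
      have h2 : S ≤ q / (q - 1) * q ^ t := by
        rw [div_mul_eq_mul_div, ← pow_succ']
        exact hShigh
      calc S * n ^ c ≤ (q / (q - 1) * q ^ t) * n ^ c :=
            mul_le_mul_of_nonneg_right h2 hnc.le
        _ = q / (q - 1) * n ^ c * q ^ t := by ring
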